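/- For a tuple (d_1, ..., d_r) of positive integers, define χ(d_1, ..., d_r) = (Π d_i) · (coefficient of X³ in the formal power series (1 + X)^{4+r} · Π_{i=1}^{r} (1 + d_i X)^{−1} over ℚ). Then: χ(70,16,16,14,7,6) = χ(56,49,8,6,5,4,4) = −7767425433600; χ(88,28,19,14,6,6) = χ(76,56,11,7,6,6,2) = −35445749391360; and χ(84,29,25,25,18,7) = χ(60,58,49,9,5,5,5) = −384536710530000. -/

import Mathlib

lemma geom_inv (d : ℚ) :
    (1 + PowerSeries.C (R := ℚ) d * PowerSeries.X)⁻¹ = PowerSeries.mk fun n => (-d)^n := by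
  rw [PowerSeries.inv_eq_iff_mul_eq_one (by simp)]
  ext n
  rw [mul_add, mul_one]
  cases n with
  | zero => simp
  | succ m =>
    have h : (PowerSeries.mk fun n => (-d : ℚ)^n) * (PowerSeries.C (R := ℚ) d * PowerSeries.X)
        = ((PowerSeries.mk fun n => (-d : ℚ)^n) * PowerSeries.C (R := ℚ) d) * PowerSeries.X := by ring
    rw [h]
    simp [PowerSeries.coeff_succ_mul_X, pow_succ]

lemma coeff_one_add_X_pow (n k : ℕ) (hk : k ≤ n) :
    PowerSeries.coeff (R := ℚ) k ((1 + PowerSeries.X) ^ n) = n.choose k := by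
  rw [add_pow]
  simp only [one_pow, one_mul, map_sum, ← PowerSeries.C_eq_algebraMap,
    ← map_natCast (PowerSeries.C (R := ℚ)), PowerSeries.coeff_mul_C]
  rw [Finset.sum_eq_single (n - k)]
  · simp [PowerSeries.coeff_X_pow, Nat.sub_sub_self hk, Nat.choose_symm hk]
  · intro b hb hb'
    have hbn : b < n + 1 := Finset.mem_range.mp hb
    have : ¬ (k = n - b) := by omega
    simp [PowerSeries.coeff_X_pow, this]
  · intro h; exact absurd (Finset.mem_range.mpr (by omega)) h

lemma cmul (k : ℕ) (f g : PowerSeries ℚ) : PowerSeries.coeff (R := ℚ) k (f * g)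
    = ∑ i ∈ Finset.range (k+1), PowerSeries.coeff (R := ℚ) i f * PowerSeries.coeff (R := ℚ) (k - i) g := by
  rw [PowerSeries.coeff_mul, Finset.Nat.sum_antidiagonal_eq_sum_range_succ_mk]

lemma c0 (f g : PowerSeries ℚ) : PowerSeries.coeff (R := ℚ) 0 (f * g)
    = PowerSeries.coeff (R := ℚ) 0 f * PowerSeries.coeff (R := ℚ) 0 g := by
  rw [cmul]; simp [Finset.sum_range_succ]

lemma c1 (f g : PowerSeries ℚ) : PowerSeries.coeff (R := ℚ) 1 (f * g)
    = PowerSeries.coeff (R := ℚ) 0 f * PowerSeries.coeff (R := ℚ) 1 g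
    + PowerSeries.coeff (R := ℚ) 1 f * PowerSeries.coeff (R := ℚ) 0 g := by
  rw [cmul]; rw [show (1:ℕ)+1 = 2 from rfl, Finset.sum_range_succ, Finset.sum_range_succ,
    Finset.sum_range_zero]; norm_num

lemma c2 (f g : PowerSeries ℚ) : PowerSeries.coeff (R := ℚ) 2 (f * g)
    = PowerSeries.coeff (R := ℚ) 0 f * PowerSeries.coeff (R := ℚ) 2 g
    + PowerSeries.coeff (R := ℚ) 1 f * PowerSeries.coeff (R := ℚ) 1 g
    + PowerSeries.coeff (R := ℚ) 2 f * PowerSeries.coeff (R := ℚ) 0 g := by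
  rw [cmul]; rw [show (2:ℕ)+1 = 3 from rfl, Finset.sum_range_succ, Finset.sum_range_succ,
    Finset.sum_range_succ, Finset.sum_range_zero]; norm_num

lemma c3 (f g : PowerSeries ℚ) : PowerSeries.coeff (R := ℚ) 3 (f * g)
    = PowerSeries.coeff (R := ℚ) 0 f * PowerSeries.coeff (R := ℚ) 3 g
    + PowerSeries.coeff (R := ℚ) 1 f * PowerSeries.coeff (R := ℚ) 2 g
    + PowerSeries.coeff (R := ℚ) 2 f * PowerSeries.coeff (R := ℚ) 1 g
    + PowerSeries.coeff (R := ℚ) 3 f * PowerSeries.coeff (R := ℚ) 0 g := by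
  rw [cmul]; rw [show (3:ℕ)+1 = 4 from rfl, Finset.sum_range_succ, Finset.sum_range_succ,
    Finset.sum_range_succ, Finset.sum_range_succ, Finset.sum_range_zero]; norm_num

/-- For a tuple `(d₁, ..., d_r)` of positive integers, the Euler number
`χ(d₁, ..., d_r) = (Π dᵢ) · [X³] ((1 + X)^(4+r) · Π (1 + dᵢX)⁻¹)` computed in `ℚ⟦X⟧`. -/
noncomputable def chiCI (l : List ℤ) : ℚ :=
  (l.map (fun d => (d : ℚ))).prod *
    PowerSeries.coeff (R := ℚ) 3
      ((1 + PowerSeries.X) ^ (4 + l.length) *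
        (l.map (fun d => (1 + PowerSeries.C (R := ℚ) (d : ℚ) * PowerSeries.X)⁻¹)).prod)

/-- The Euler numbers of the three Wang–Du pairs of complete intersection threefolds
agree within each pair. -/
theorem stmt_11 :
    chiCI [70, 16, 16, 14, 7, 6] = -7767425433600 ∧
    chiCI [56, 49, 8, 6, 5, 4, 4] = -7767425433600 ∧
    chiCI [88, 28, 19, 14, 6, 6] = -35445749391360 ∧
    chiCI [76, 56, 11, 7, 6, 6, 2] = -35445749391360 ∧
    chiCI [84, 29, 25, 25, 18, 7] = -384536710530000 ∧
    chiCI [60, 58, 49, 9, 5, 5, 5] = -384536710530000 := by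
  refine ⟨?_, ?_, ?_, ?_, ?_, ?_⟩ <;>
  · simp only [chiCI, List.map_cons, List.map_nil, List.prod_cons, List.prod_nil,
      List.length_cons, List.length_nil, mul_one, geom_inv]
    norm_num [c0, c1, c2, c3, PowerSeries.coeff_mk,
      coeff_one_add_X_pow 10 0 (by norm_num), coeff_one_add_X_pow 10 1 (by norm_num),
      coeff_one_add_X_pow 10 2 (by norm_num), coeff_one_add_X_pow 10 3 (by norm_num),
      coeff_one_add_X_pow 11 0 (by norm_num), coeff_one_add_X_pow 11 1 (by norm_num),
      coeff_one_add_X_pow 11 2 (by norm_num), coeff_one_add_X_pow 11 3 (by norm_num),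
      show Nat.choose 10 2 = 45 from rfl, show Nat.choose 10 3 = 120 from rfl,
      show Nat.choose 11 2 = 55 from rfl, show Nat.choose 11 3 = 165 from rfl]
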